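/- arXiv:1504.00852 — 4 statements merged into one kernel-verified Lean document; each statement's English description precedes it below -/
import Mathlib

section
/- Let R be a commutative ring, M a free R-module with basis (e₁, e₂) (so M has rank 2), and Q a quadratic form on M. Write ι : M → CliffordAlgebra Q for the canonical map, b = polar Q e₁ e₂, q₁ = Q e₁, q₂ = Q e₂, and π = ι e₁ * ι e₂. Then: (a) π * π = b • π − (q₁ * q₂) • 1; (b) the pair (1, π) is an R-basis of the even submodule evenOdd Q 0 of CliffordAlgebra Q; (c) reverse π = b • 1 − π. In particular, the even Clifford algebra of a binary quadratic form is a commutative R-algebra that is free of rank 2 as an R-module, and the reversal anti-automorphism restricts to the involution π ↦ b − π on it. -/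
set_option maxHeartbeats 1000000

theorem aux_expand {R A : Type*} [CommRing R] [Ring A] [Algebra R A] (r0 r1 : R) (X Y : A) :
    (r0 • X + r1 • Y) * (r0 • X + r1 • Y)
      = (r0 * r0) • (X * X) + (r0 * r1) • (X * Y + Y * X) + (r1 * r1) • (Y * Y) := by
  simp only [add_mul, mul_add, smul_mul_assoc, mul_smul_comm, smul_add, smul_smul]
  rw [mul_comm r1 r0]
  abel

open CliffordAlgebra in
theorem aux_sep {R : Type*} [CommRing R] {M : Type*} [AddCommGroup M] [Module R M]
    (e : Module.Basis (Fin 2) R M) (Q : QuadraticForm R M) (a c : R)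
    (h : a • (1 : CliffordAlgebra Q) + c • (ι Q (e 0) * ι Q (e 1)) = 0) :
    a = 0 ∧ c = 0 := by
  set q1 := Q (e 0) with hq1
  set q2 := Q (e 1) with hq2
  set b := QuadraticMap.polar Q (e 0) (e 1) with hb
  set X : Matrix (Fin 4) (Fin 4) R := !![0, q1, 0, 0; 1, 0, 0, 0; 0, 0, 0, q1; 0, 0, 1, 0]
    with hX
  set Y : Matrix (Fin 4) (Fin 4) R := !![0, b, q2, 0; 0, 0, 0, -q2; 1, 0, 0, b; 0, -1, 0, 0]
    with hY
  have hXX : X * X = q1 • 1 := by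
    ext i j; fin_cases i <;> fin_cases j <;>
      simp [hX, Matrix.mul_apply, Fin.sum_univ_four, Matrix.one_apply, Matrix.vecHead,
        Matrix.vecTail] <;> ring_nf
  have hYY : Y * Y = q2 • 1 := by
    ext i j; fin_cases i <;> fin_cases j <;>
      simp [hY, Matrix.mul_apply, Fin.sum_univ_four, Matrix.one_apply, Matrix.vecHead,
        Matrix.vecTail] <;> ring_nf
  have hXY : X * Y + Y * X = b • 1 := by
    ext i j; fin_cases i <;> fin_cases j <;>
      simp [hX, hY, Matrix.mul_apply, Fin.sum_univ_four, Matrix.one_apply, Matrix.vecHead,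
        Matrix.vecTail] <;> ring_nf
  set f : M →ₗ[R] Matrix (Fin 4) (Fin 4) R :=
    (LinearMap.toSpanSingleton R _ X).comp (e.coord 0)
      + (LinearMap.toSpanSingleton R _ Y).comp (e.coord 1) with hf
  have hfapp : ∀ m, f m = e.repr m 0 • X + e.repr m 1 • Y := by
    intro m
    simp [hf, LinearMap.toSpanSingleton, Module.Basis.coord]
  have hcond : ∀ m, f m * f m = algebraMap R (Matrix (Fin 4) (Fin 4) R) (Q m) := by
    intro m
    have hm : (e.repr m 0) • e 0 + (e.repr m 1) • e 1 = m := by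
      have := e.sum_repr m
      rwa [Fin.sum_univ_two] at this
    have hQm : Q m = e.repr m 0 * e.repr m 0 * q1 + e.repr m 0 * e.repr m 1 * b
        + e.repr m 1 * e.repr m 1 * q2 := by
      conv_lhs => rw [← hm]
      rw [QuadraticMap.map_add Q _ _, QuadraticMap.map_smul, QuadraticMap.map_smul,
        QuadraticMap.polar_smul_left, QuadraticMap.polar_smul_right]
      simp only [smul_eq_mul, hq1, hq2, hb]
      ring
    rw [hfapp, hQm, Algebra.algebraMap_eq_smul_one, aux_expand, hXX, hYY, hXY]
    rw [smul_smul, smul_smul, smul_smul, add_smul, add_smul]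
  set φ := CliffordAlgebra.lift Q ⟨f, hcond⟩ with hφ
  have hx : φ (ι Q (e 0)) = X := by
    rw [hφ, CliffordAlgebra.lift_ι_apply, hfapp]
    simp
  have hy : φ (ι Q (e 1)) = Y := by
    rw [hφ, CliffordAlgebra.lift_ι_apply, hfapp]
    simp
  have h2 : a • (1 : Matrix (Fin 4) (Fin 4) R) + c • (X * Y) = 0 := by
    have h3 := congrArg φ h
    simp only [map_add, map_smul, map_mul, map_one, map_zero, hx, hy] at h3
    exact h3
  constructor
  · have := congrFun (congrFun h2 0) 0
    simpa [hX, hY, Matrix.mul_apply, Fin.sum_univ_four, Matrix.one_apply, Matrix.vecHead,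
      Matrix.vecTail] using this
  · have := congrFun (congrFun h2 3) 0
    simpa [hX, hY, Matrix.mul_apply, Fin.sum_univ_four, Matrix.one_apply, Matrix.vecHead,
      Matrix.vecTail] using this

/-- Even Clifford algebra of a binary quadratic form: multiplication law of
`π = ι e₁ * ι e₂`, freeness of rank 2 with basis `(1, π)`, the action of `reverse`,
and commutativity of the even part. -/
theorem stmt0 {R : Type*} [CommRing R] {M : Type*} [AddCommGroup M] [Module R M]
    (e : Module.Basis (Fin 2) R M) (Q : QuadraticForm R M) :
    (CliffordAlgebra.ι Q (e 0) * CliffordAlgebra.ι Q (e 1)) *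
        (CliffordAlgebra.ι Q (e 0) * CliffordAlgebra.ι Q (e 1)) =
      QuadraticMap.polar Q (e 0) (e 1) •
          (CliffordAlgebra.ι Q (e 0) * CliffordAlgebra.ι Q (e 1)) -
        (Q (e 0) * Q (e 1)) • (1 : CliffordAlgebra Q) ∧
    (∃ B : Module.Basis (Fin 2) R (CliffordAlgebra.evenOdd Q 0),
      (B 0 : CliffordAlgebra Q) = 1 ∧
      (B 1 : CliffordAlgebra Q) =
        CliffordAlgebra.ι Q (e 0) * CliffordAlgebra.ι Q (e 1)) ∧
    CliffordAlgebra.reverse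
        (CliffordAlgebra.ι Q (e 0) * CliffordAlgebra.ι Q (e 1)) =
      QuadraticMap.polar Q (e 0) (e 1) • (1 : CliffordAlgebra Q) -
        CliffordAlgebra.ι Q (e 0) * CliffordAlgebra.ι Q (e 1) ∧
    ∀ x y : CliffordAlgebra Q, x ∈ CliffordAlgebra.evenOdd Q 0 →
      y ∈ CliffordAlgebra.evenOdd Q 0 → x * y = y * x := by
  open CliffordAlgebra in
  set π := ι Q (e 0) * ι Q (e 1) with hπ
  set b := QuadraticMap.polar Q (e 0) (e 1) with hb
  have hswap : ι Q (e 1) * ι Q (e 0) = algebraMap R _ b - π := by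
    rw [CliffordAlgebra.ι_mul_ι_comm, QuadraticMap.polar_comm, hπ, hb]
  have ha : π * π = b • π - (Q (e 0) * Q (e 1)) • (1 : CliffordAlgebra Q) := by
    calc π * π = ι Q (e 0) * ((ι Q (e 1) * ι Q (e 0)) * ι Q (e 1)) := by
          rw [hπ]; simp only [mul_assoc]
      _ = ι Q (e 0) * ((algebraMap R _ b - π) * ι Q (e 1)) := by rw [hswap]
      _ = b • π - (Q (e 0) * Q (e 1)) • 1 := by
          rw [sub_mul, mul_sub, ← Algebra.smul_def, mul_smul_comm, hπ]
          rw [show ι Q (e 0) * (ι Q (e 0) * ι Q (e 1) * ι Q (e 1))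
              = (ι Q (e 0) * ι Q (e 0)) * (ι Q (e 1) * ι Q (e 1)) by simp only [mul_assoc]]
          rw [ι_sq_scalar, ι_sq_scalar, ← RingHom.map_mul (algebraMap R (CliffordAlgebra Q)),
            Algebra.algebraMap_eq_smul_one]
  have hcrev : reverse π = b • (1 : CliffordAlgebra Q) - π := by
    rw [hπ, reverse.map_mul, reverse_ι, reverse_ι, hswap, Algebra.algebraMap_eq_smul_one]
  -- the span of {1, π} is the even part
  set S := Submodule.span R ({1, π} : Set (CliffordAlgebra Q)) with hS
  have h1S : (1 : CliffordAlgebra Q) ∈ S := Submodule.subset_span (Set.mem_insert _ _)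
  have hπS : π ∈ S := Submodule.subset_span (Set.mem_insert_of_mem _ rfl)
  have hππS : π * π ∈ S := by rw [ha]; exact sub_mem (S.smul_mem _ hπS) (S.smul_mem _ h1S)
  have hmulS : ∀ u ∈ S, ∀ s ∈ S, u * s ∈ S := by
    intro u hu s hs
    induction hu, hs using Submodule.span_induction₂ with
    | mem_mem x y hx hy =>
      rcases hx with rfl | hx <;> rcases hy with rfl | hy
      · simpa using h1S
      · rcases hy with rfl; simpa using hπS
      · rcases hx with rfl; simpa using hπS
      · rcases hx with rfl; rcases hy with rfl; exact hππS
    | zero_left y hy => simpa using S.zero_mem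
    | zero_right x hx => simpa using S.zero_mem
    | add_left x y z hx hy hz h1 h2 => simpa [add_mul] using S.add_mem h1 h2
    | add_right x y z hx hy hz h1 h2 => simpa [mul_add] using S.add_mem h1 h2
    | smul_left r x y hx hy h1 => simpa [smul_mul_assoc] using S.smul_mem r h1
    | smul_right r x y hx hy h1 => simpa [mul_smul_comm] using S.smul_mem r h1
  have hgen : ∀ m1 m2 : M, ι Q m1 * ι Q m2 ∈ S := by
    have g00 : ι Q (e 0) * ι Q (e 0) ∈ S := by
      rw [ι_sq_scalar, Algebra.algebraMap_eq_smul_one]; exact S.smul_mem _ h1S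
    have g11 : ι Q (e 1) * ι Q (e 1) ∈ S := by
      rw [ι_sq_scalar, Algebra.algebraMap_eq_smul_one]; exact S.smul_mem _ h1S
    have g10 : ι Q (e 1) * ι Q (e 0) ∈ S := by
      rw [hswap, Algebra.algebraMap_eq_smul_one]; exact sub_mem (S.smul_mem _ h1S) hπS
    intro m1 m2
    have hm1 : (e.repr m1 0) • e 0 + (e.repr m1 1) • e 1 = m1 := by
      have := e.sum_repr m1; rwa [Fin.sum_univ_two] at this
    have hm2 : (e.repr m2 0) • e 0 + (e.repr m2 1) • e 1 = m2 := by
      have := e.sum_repr m2; rwa [Fin.sum_univ_two] at this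
    rw [← hm1, ← hm2, map_add, map_add, map_smul, map_smul, map_smul, map_smul]
    simp only [add_mul, mul_add, smul_mul_assoc, mul_smul_comm, smul_add, smul_smul]
    repeat
      first
        | exact g00 | exact g10 | exact g11 | exact hπS
        | apply S.add_mem | apply S.smul_mem
  have hSeq : S = CliffordAlgebra.evenOdd Q 0 := by
    refine le_antisymm (Submodule.span_le.mpr ?_) ?_
    · rintro z hz
      rcases hz with rfl | hz
      · have := SetLike.algebraMap_mem_graded (CliffordAlgebra.evenOdd Q) (1 : R)
        rwa [map_one] at this
      · rcases hz with rfl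
        exact CliffordAlgebra.ι_mul_ι_mem_evenOdd_zero Q _ _
    · intro z hz
      induction z, hz using CliffordAlgebra.even_induction with
      | algebraMap r => rw [Algebra.algebraMap_eq_smul_one]; exact S.smul_mem _ h1S
      | add x y hx hy h1 h2 => exact S.add_mem h1 h2
      | ι_mul_ι_mul m1 m2 x hx h1 => exact hmulS _ (hgen m1 m2) _ h1
  -- the basis
  have h1mem : (1 : CliffordAlgebra Q) ∈ CliffordAlgebra.evenOdd Q 0 := by
    have := SetLike.algebraMap_mem_graded (CliffordAlgebra.evenOdd Q) (1 : R)
    rwa [map_one] at this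
  have hπmem : π ∈ CliffordAlgebra.evenOdd Q 0 := CliffordAlgebra.ι_mul_ι_mem_evenOdd_zero Q _ _
  set v : Fin 2 → CliffordAlgebra.evenOdd Q 0 := ![⟨1, h1mem⟩, ⟨π, hπmem⟩] with hv
  have hli : LinearIndependent R v := by
    rw [Fintype.linearIndependent_iff]
    intro g hg
    have hg' : g 0 • (1 : CliffordAlgebra Q) + g 1 • π = 0 := by
      have := congrArg (Submodule.subtype _) hg
      simpa [Fin.sum_univ_two, hv] using this
    obtain ⟨h0, h1⟩ := aux_sep e Q _ _ hg'
    intro i; fin_cases i <;> assumption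
  have hsp : ⊤ ≤ Submodule.span R (Set.range v) := by
    have himg : (Submodule.span R (Set.range v)).map (Submodule.subtype _)
        = Submodule.span R ({1, π} : Set (CliffordAlgebra Q)) := by
      rw [Submodule.map_span]
      congr 1
      ext z
      simp only [Set.mem_image, Set.mem_range, Set.mem_insert_iff, Set.mem_singleton_iff]
      constructor
      · rintro ⟨w, ⟨i, rfl⟩, rfl⟩
        fin_cases i
        · left; rfl
        · right; rfl
      · rintro (rfl | rfl)
        · exact ⟨v 0, ⟨0, rfl⟩, rfl⟩
        · exact ⟨v 1, ⟨1, rfl⟩, rfl⟩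
    have hmap : (Submodule.span R (Set.range v)).map (Submodule.subtype _)
        = (⊤ : Submodule R (CliffordAlgebra.evenOdd Q 0)).map (Submodule.subtype _) := by
      rw [himg, Submodule.map_subtype_top, ← hS, hSeq]
    exact (Submodule.map_injective_of_injective (Submodule.injective_subtype _) hmap).ge
  refine ⟨ha, ⟨⟨Module.Basis.mk hli hsp, ?_, ?_⟩, hcrev, ?_⟩⟩
  · rw [Module.Basis.mk_apply]; rfl
  · rw [Module.Basis.mk_apply]; rfl
  · intro x y hx hy
    rw [← hSeq] at hx hy
    induction hx, hy using Submodule.span_induction₂ with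
    | mem_mem x y hx hy =>
      rcases hx with rfl | hx <;> rcases hy with rfl | hy
      · rfl
      · simp
      · simp
      · rcases hx with rfl; rcases hy with rfl; rfl
    | zero_left y hy => simp
    | zero_right x hx => simp
    | add_left x y z hx hy hz h1 h2 => rw [add_mul, mul_add, h1, h2]
    | add_right x y z hx hy hz h1 h2 => rw [mul_add, add_mul, h1, h2]
    | smul_left r x y hx hy h1 => rw [smul_mul_assoc, mul_smul_comm, h1]
    | smul_right r x y hx hy h1 => rw [mul_smul_comm, smul_mul_assoc, h1]
end

section
/- Let R be a commutative ring, M a free R-module with basis (e₁, e₂) (so M has rank 2), and Q a quadratic form on M. Then for every v ∈ M and every element a of the even submodule evenOdd Q 0 of CliffordAlgebra Q, one has ι(v) * a = reverse(a) * ι(v) in CliffordAlgebra Q. -/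
open CliffordAlgebra

section aux

variable {R : Type*} [CommRing R] {M : Type*} [AddCommGroup M] [Module R M]
  (Q : QuadraticForm R M)

private lemma sq_swap (x y : M) :
    ι Q x * (ι Q x * ι Q y) = ι Q y * (ι Q x * ι Q x) := by
  rw [← mul_assoc, ι_sq_scalar, Algebra.commutes]

/-- Key rank-2 identity: `ι v * ι w * ι u = ι u * ι w * ι v`. -/
private lemma key (e : Module.Basis (Fin 2) R M) (v w u : M) :
    ι Q v * (ι Q w * ι Q u) = ι Q u * (ι Q w * ι Q v) := by
  have hrepr : ∀ x : M, x = e.repr x 0 • e 0 + e.repr x 1 • e 1 := by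
    intro x
    have := e.sum_repr x
    rw [Fin.sum_univ_two] at this
    exact this.symm
  rw [hrepr v, hrepr w, hrepr u]
  simp only [map_add, map_smul, add_mul, mul_add, smul_mul_assoc, mul_smul_comm, smul_smul]
  have h001 : ι Q (e 0) * (ι Q (e 0) * ι Q (e 1)) = ι Q (e 1) * (ι Q (e 0) * ι Q (e 0)) :=
    sq_swap Q _ _
  have h011 : ι Q (e 1) * (ι Q (e 1) * ι Q (e 0)) = ι Q (e 0) * (ι Q (e 1) * ι Q (e 1)) :=
    sq_swap Q _ _
  rw [h001, h011]
  module

private lemma main_aux (e : Module.Basis (Fin 2) R M)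
    (a : CliffordAlgebra Q) (ha : a ∈ CliffordAlgebra.evenOdd Q 0) :
    (∀ w : M, ι Q w * a = reverse a * ι Q w) ∧
    (∀ w : M, ι Q w * reverse a = a * ι Q w) := by
  induction a, ha using CliffordAlgebra.even_induction with
  | algebraMap r =>
      constructor <;> intro w <;> simp [Algebra.commutes]
  | add x y hx hy ihx ihy =>
      refine ⟨fun w => ?_, fun w => ?_⟩ <;>
        simp only [map_add, mul_add, add_mul, (ihx.1 w), (ihy.1 w), (ihx.2 w), (ihy.2 w)]
  | ι_mul_ι_mul m₁ m₂ x hx ih =>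
      obtain ⟨ih1, ih2⟩ := ih
      have hrev : reverse (ι Q m₁ * ι Q m₂ * x) = reverse x * (ι Q m₂ * ι Q m₁) := by
        simp [map_mul, mul_assoc]
      refine ⟨fun w => ?_, fun w => ?_⟩
      · rw [hrev]
        calc ι Q w * (ι Q m₁ * ι Q m₂ * x)
            = (ι Q w * (ι Q m₁ * ι Q m₂)) * x := by simp only [mul_assoc]
          _ = (ι Q m₂ * (ι Q m₁ * ι Q w)) * x := by rw [key Q e]
          _ = ι Q m₂ * (ι Q m₁ * (ι Q w * x)) := by simp only [mul_assoc]
          _ = ι Q m₂ * (ι Q m₁ * (reverse x * ι Q w)) := by rw [ih1 w]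
          _ = ι Q m₂ * ((ι Q m₁ * reverse x) * ι Q w) := by simp only [mul_assoc]
          _ = ι Q m₂ * ((x * ι Q m₁) * ι Q w) := by rw [ih2 m₁]
          _ = (ι Q m₂ * x) * (ι Q m₁ * ι Q w) := by simp only [mul_assoc]
          _ = (reverse x * ι Q m₂) * (ι Q m₁ * ι Q w) := by rw [ih1 m₂]
          _ = reverse x * (ι Q m₂ * ι Q m₁) * ι Q w := by simp only [mul_assoc]
      · rw [hrev]
        calc ι Q w * (reverse x * (ι Q m₂ * ι Q m₁))
            = (ι Q w * reverse x) * (ι Q m₂ * ι Q m₁) := by simp only [mul_assoc]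
          _ = (x * ι Q w) * (ι Q m₂ * ι Q m₁) := by rw [ih2 w]
          _ = x * (ι Q w * (ι Q m₂ * ι Q m₁)) := by simp only [mul_assoc]
          _ = x * (ι Q m₁ * (ι Q m₂ * ι Q w)) := by rw [key Q e]
          _ = (x * ι Q m₁) * (ι Q m₂ * ι Q w) := by simp only [mul_assoc]
          _ = (ι Q m₁ * reverse x) * (ι Q m₂ * ι Q w) := by rw [← ih2 m₁]
          _ = ι Q m₁ * ((reverse x * ι Q m₂) * ι Q w) := by simp only [mul_assoc]
          _ = ι Q m₁ * ((ι Q m₂ * x) * ι Q w) := by rw [← ih1 m₂]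
          _ = ι Q m₁ * ι Q m₂ * x * ι Q w := by simp only [mul_assoc]

end aux

/-- In the Clifford algebra of a binary quadratic form, every vector `ι v`
conjugates the even part by the reversal involution: `ι v * a = reverse a * ι v`. -/
theorem stmt1 {R : Type*} [CommRing R] {M : Type*} [AddCommGroup M] [Module R M]
    (e : Module.Basis (Fin 2) R M) (Q : QuadraticForm R M)
    (v : M) (a : CliffordAlgebra Q) (ha : a ∈ CliffordAlgebra.evenOdd Q 0) :
    CliffordAlgebra.ι Q v * a = CliffordAlgebra.reverse a * CliffordAlgebra.ι Q v :=
  (main_aux Q e a ha).1 v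
end

section
/- Let R be a commutative ring, M a free R-module with basis (e₁, e₂) (so M has rank 2), and Q a quadratic form on M. Then the odd submodule evenOdd Q 1 of CliffordAlgebra Q is equal to the image of the canonical map ι : M → CliffordAlgebra Q. Consequently CliffordAlgebra Q decomposes as an R-module into the internal direct sum of the even subalgebra evenOdd Q 0 and ι(M). -/
open CliffordAlgebra

section aux
variable {R : Type*} [CommRing R] {M : Type*} [AddCommGroup M] [Module R M]
  (Q : QuadraticForm R M)

lemma aux_aa_b (a b : M) : ι Q a * ι Q a * ι Q b ∈ LinearMap.range (ι Q) := by
  refine ⟨Q a • b, ?_⟩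
  rw [map_smul, ι_sq_scalar, Algebra.smul_def]

lemma aux_a_bb (a b : M) : ι Q a * ι Q b * ι Q b ∈ LinearMap.range (ι Q) := by
  refine ⟨Q b • a, ?_⟩
  rw [map_smul, mul_assoc, ι_sq_scalar, Algebra.smul_def, Algebra.commutes]

lemma aux_ab_a (a b : M) : ι Q a * ι Q b * ι Q a ∈ LinearMap.range (ι Q) := by
  refine ⟨QuadraticMap.polar Q b a • a - Q a • b, ?_⟩
  rw [map_sub, map_smul, map_smul, mul_assoc, ι_mul_ι_comm, mul_sub, ← mul_assoc,
    ι_sq_scalar, Algebra.smul_def, Algebra.smul_def, Algebra.commutes]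

lemma triple_mem (e : Module.Basis (Fin 2) R M) (x y z : M) :
    ι Q x * ι Q y * ι Q z ∈ LinearMap.range (ι Q) := by
  have base : ∀ i j k : Fin 2, ι Q (e i) * ι Q (e j) * ι Q (e k) ∈ LinearMap.range (ι Q) := by
    intro i j k
    rcases eq_or_ne i j with rfl | hij
    · exact aux_aa_b Q _ _
    rcases eq_or_ne j k with rfl | hjk
    · exact aux_a_bb Q _ _
    have : i = k := by omega
    subst this
    exact aux_ab_a Q _ _
  rw [← e.sum_repr x, ← e.sum_repr y, ← e.sum_repr z]
  simp only [map_sum, map_smul, Finset.sum_mul, Finset.mul_sum, smul_mul_assoc, mul_smul_comm]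
  repeat'
    first
    | exact base _ _ _
    | apply Submodule.sum_mem _ fun _ _ => ?_
    | apply Submodule.smul_mem _ _ ?_

end aux

/-- For a binary quadratic form, the odd part of the Clifford algebra is exactly
`ι(M)`, and the Clifford algebra is the internal direct sum of the even part and
`ι(M)`. -/
theorem stmt2 {R : Type*} [CommRing R] {M : Type*} [AddCommGroup M] [Module R M]
    (e : Module.Basis (Fin 2) R M) (Q : QuadraticForm R M) :
    CliffordAlgebra.evenOdd Q 1 = LinearMap.range (CliffordAlgebra.ι Q) ∧
    IsCompl (CliffordAlgebra.evenOdd Q 0) (LinearMap.range (CliffordAlgebra.ι Q)) := by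
  have h1 : CliffordAlgebra.evenOdd Q 1 = LinearMap.range (CliffordAlgebra.ι Q) := by
    refine le_antisymm ?_ (CliffordAlgebra.range_ι_le_evenOdd_one Q)
    intro x hx
    refine CliffordAlgebra.odd_induction (Q := Q)
      (P := fun x _ => x ∈ LinearMap.range (CliffordAlgebra.ι Q))
      (fun v => LinearMap.mem_range_self _ v)
      (fun x y hx hy ihx ihy => Submodule.add_mem _ ihx ihy)
      (fun m₁ m₂ x hx ih => ?_) x hx
    obtain ⟨v, rfl⟩ := ih
    exact triple_mem Q e m₁ m₂ v
  exact ⟨h1, h1 ▸ CliffordAlgebra.evenOdd_isCompl Q⟩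
end

section
/- Let L be a free ℤ-module of finite rank, Q : L → ℤ a quadratic form, and L₀ ⊆ L a ℤ-module direct summand of L. Let Q₀ be the restriction of Q to L₀, so that the inclusion L₀ → L is an isometry of quadratic modules, inducing an algebra homomorphism f : CliffordAlgebra Q₀ → CliffordAlgebra Q. Then CliffordAlgebra Q, regarded as a module over CliffordAlgebra Q₀ via f (restriction of scalars along f), is a free CliffordAlgebra Q₀-module. -/
noncomputable section CliffordMonomialBasis

open CliffordAlgebra

namespace CliffordMono

variable {R : Type*} [CommRing R] {L : Type*} [AddCommGroup L] [Module R L]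
variable {σ : Type*} [LinearOrder σ] [DecidableEq σ]
variable (b : Module.Basis σ R L) (Q : QuadraticForm R L)

/-- The monomial in the Clifford algebra attached to a finite set of basis indices,
taken as the product in increasing order. -/
def mono (T : Finset σ) : CliffordAlgebra Q :=
  ((T.sort (· ≤ ·)).map fun i => CliffordAlgebra.ι Q (b i)).prod

@[simp] theorem mono_empty : mono b Q (∅ : Finset σ) = 1 := by
  simp [mono]

theorem mono_insert {t : σ} {T : Finset σ} (h₁ : ∀ s ∈ T, t ≤ s) (h₂ : t ∉ T) :
    mono b Q (insert t T) = CliffordAlgebra.ι Q (b t) * mono b Q T := by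
  rw [mono, Finset.sort_insert _ h₁ h₂, List.map_cons, List.prod_cons, mono]

theorem mono_min {T : Finset σ} (hT : T.Nonempty) :
    mono b Q T = CliffordAlgebra.ι Q (b (T.min' hT)) * mono b Q (T.erase (T.min' hT)) := by
  conv_lhs => rw [← Finset.insert_erase (T.min'_mem hT)]
  exact mono_insert b Q (fun s hs => T.min'_le s (Finset.mem_of_mem_erase hs))
    (Finset.notMem_erase _ _)

end CliffordMono
namespace CliffordMono

variable {R : Type*} [CommRing R] {L : Type*} [AddCommGroup L] [Module R L]
variable {σ : Type*} [LinearOrder σ] [DecidableEq σ]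
variable (b : Module.Basis σ R L) (Q : QuadraticForm R L)

theorem ι_mul_mono_mem_span_aux :
    ∀ (n : ℕ) (T : Finset σ), T.card ≤ n → ∀ t : σ,
      CliffordAlgebra.ι Q (b t) * mono b Q T ∈
        Submodule.span R (mono b Q '' {S : Finset σ | S ⊆ insert t T}) := by
  intro n
  induction n with
  | zero =>
    intro T hT t
    obtain rfl : T = ∅ := Finset.card_eq_zero.mp (Nat.le_zero.mp hT)
    rw [← mono_insert b Q (by simp) (Finset.notMem_empty t)]
    exact Submodule.subset_span ⟨insert t ∅, by simp, rfl⟩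
  | succ n ih =>
    intro T hT t
    rcases T.eq_empty_or_nonempty with rfl | hne
    · rw [← mono_insert b Q (by simp) (Finset.notMem_empty t)]
      exact Submodule.subset_span ⟨insert t ∅, by simp, rfl⟩
    · have hiT : T.min' hne ∈ T := T.min'_mem hne
      set i := T.min' hne with hi
      have hcard : (T.erase i).card ≤ n := by
        rw [Finset.card_erase_of_mem hiT]
        have : 1 ≤ T.card := Finset.card_pos.mpr hne
        omega
      rcases lt_trichotomy t i with hlt | rfl | hgt
      · have h₁ : ∀ s ∈ T, t ≤ s := fun s hs => le_of_lt (lt_of_lt_of_le hlt (T.min'_le s hs))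
        have h₂ : t ∉ T := fun h => absurd (T.min'_le t h) (not_le.mpr hlt)
        rw [← mono_insert b Q h₁ h₂]
        exact Submodule.subset_span ⟨insert t T, fun x hx => hx, rfl⟩
      · rw [mono_min b Q hne, ← mul_assoc, ι_sq_scalar, ← Algebra.smul_def]
        exact Submodule.smul_mem _ _ (Submodule.subset_span
          ⟨T.erase i, fun x hx => Finset.mem_insert_of_mem (Finset.mem_of_mem_erase hx), rfl⟩)
      · rw [mono_min b Q hne, ← mul_assoc, ← hi]
        have hsw : CliffordAlgebra.ι Q (b t) * CliffordAlgebra.ι Q (b i) =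
            algebraMap R _ (QuadraticMap.polar Q (b t) (b i)) -
              CliffordAlgebra.ι Q (b i) * CliffordAlgebra.ι Q (b t) := by
          rw [← ι_mul_ι_add_swap, add_sub_cancel_right]
        rw [hsw, sub_mul, mul_assoc]
        have key : ∀ x ∈ Submodule.span R (mono b Q '' {S : Finset σ | S ⊆ insert t (T.erase i)}),
            CliffordAlgebra.ι Q (b i) * x ∈
              Submodule.span R (mono b Q '' {S : Finset σ | S ⊆ insert t T}) := by
          intro x hx
          induction hx using Submodule.span_induction with
          | mem x hx =>
            obtain ⟨S, hS, rfl⟩ := hx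
            have hiS : i ∉ S := by
              intro h
              rcases Finset.mem_insert.mp (hS h) with h' | h'
              · exact absurd h' (ne_of_lt hgt)
              · exact Finset.notMem_erase i T h'
            have h₁ : ∀ s ∈ S, i ≤ s := by
              intro s hs
              rcases Finset.mem_insert.mp (hS hs) with h' | h'
              · exact h' ▸ le_of_lt hgt
              · exact T.min'_le s (Finset.mem_of_mem_erase h')
            rw [← mono_insert b Q h₁ hiS]
            refine Submodule.subset_span ⟨insert i S, ?_, rfl⟩
            intro x hx
            rcases Finset.mem_insert.mp hx with rfl | hx
            · exact Finset.mem_insert_of_mem hiT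
            · rcases Finset.mem_insert.mp (hS hx) with rfl | hx'
              · exact Finset.mem_insert_self _ _
              · exact Finset.mem_insert_of_mem (Finset.mem_of_mem_erase hx')
          | zero => simp
          | add x y _ _ hx hy => rw [mul_add]; exact add_mem hx hy
          | smul r x _ hx => rw [mul_smul_comm]; exact Submodule.smul_mem _ _ hx
        refine sub_mem ?_ (key _ (ih (T.erase i) hcard t))
        rw [← Algebra.smul_def]
        exact Submodule.smul_mem _ _ (Submodule.subset_span
          ⟨T.erase i, fun x hx => Finset.mem_insert_of_mem (Finset.mem_of_mem_erase hx), rfl⟩)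

theorem ι_mul_mono_mem_span (t : σ) (T : Finset σ) :
    CliffordAlgebra.ι Q (b t) * mono b Q T ∈
      Submodule.span R (mono b Q '' {S : Finset σ | S ⊆ insert t T}) :=
  ι_mul_mono_mem_span_aux b Q T.card T le_rfl t

end CliffordMono
namespace CliffordMono

variable {R : Type*} [CommRing R] {L : Type*} [AddCommGroup L] [Module R L]
variable {σ : Type*} [LinearOrder σ] [DecidableEq σ]
variable (b : Module.Basis σ R L) (Q : QuadraticForm R L)

theorem mono_span_top : Submodule.span R (Set.range (mono b Q)) = ⊤ := by
  rw [eq_top_iff]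
  intro x _
  induction x using CliffordAlgebra.left_induction with
  | algebraMap r =>
    rw [Algebra.algebraMap_eq_smul_one, ← mono_empty b Q]
    exact Submodule.smul_mem _ _ (Submodule.subset_span ⟨∅, rfl⟩)
  | add x y hx hy => exact add_mem (hx trivial) (hy trivial)
  | ι_mul x m hx =>
    have key : ∀ (t : σ) (y : CliffordAlgebra Q),
        y ∈ Submodule.span R (Set.range (mono b Q)) →
        CliffordAlgebra.ι Q (b t) * y ∈ Submodule.span R (Set.range (mono b Q)) := by
      intro t y hy
      induction hy using Submodule.span_induction with
      | mem y hy =>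
        obtain ⟨T, rfl⟩ := hy
        exact Submodule.span_mono (Set.image_subset_range _ _) (ι_mul_mono_mem_span b Q t T)
      | zero => simp
      | add u v _ _ hu hv => rw [mul_add]; exact add_mem hu hv
      | smul r u _ hu => rw [mul_smul_comm]; exact Submodule.smul_mem _ _ hu
    rw [← b.linearCombination_repr m, Finsupp.linearCombination_apply, map_finsuppSum,
      Finsupp.sum_mul]
    refine Submodule.sum_mem _ fun i hi => ?_
    simp only [map_smul, smul_mul_assoc]
    exact Submodule.smul_mem _ _ (key i x (hx trivial))

end CliffordMono
namespace CliffordMono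

variable {R : Type*} [CommRing R] {L : Type*} [AddCommGroup L] [Module R L]
variable {σ : Type*} [LinearOrder σ] [DecidableEq σ]
variable (b : Module.Basis σ R L) (Q : QuadraticForm R L)

theorem coord_basis_apply (t s : σ) : b.coord t (b s) = if s = t then 1 else 0 := by
  classical
  rw [Module.Basis.coord_apply, Module.Basis.repr_self_apply]

/-- Iterated contraction with the dual-basis functionals of `T`, smallest index first. -/
def kappa (T : Finset σ) : CliffordAlgebra Q →ₗ[R] CliffordAlgebra Q :=
  ((T.sort (· ≤ ·)).map fun t =>
      (CliffordAlgebra.contractLeft (Q := Q) (b.coord t))).foldr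
    (fun f g => g ∘ₗ f) LinearMap.id

@[simp] theorem kappa_empty (x : CliffordAlgebra Q) : kappa b Q ∅ x = x := by
  simp [kappa]

theorem kappa_min {T : Finset σ} (hT : T.Nonempty) (x : CliffordAlgebra Q) :
    kappa b Q T x =
      kappa b Q (T.erase (T.min' hT))
        (CliffordAlgebra.contractLeft (b.coord (T.min' hT)) x) := by
  have hsort : T.sort (· ≤ ·) = T.min' hT :: (T.erase (T.min' hT)).sort (· ≤ ·) := by
    conv_lhs => rw [← Finset.insert_erase (T.min'_mem hT)]
    exact Finset.sort_insert _ (fun s hs => T.min'_le s (Finset.mem_of_mem_erase hs))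
      (Finset.notMem_erase _ _)
  rw [kappa, hsort, List.map_cons, List.foldr_cons]
  rfl

theorem contract_mono_eq_zero_aux :
    ∀ (n : ℕ) (T : Finset σ), T.card ≤ n → ∀ d : Module.Dual R L, (∀ s ∈ T, d (b s) = 0) →
      CliffordAlgebra.contractLeft (Q := Q) d (mono b Q T) = 0 := by
  intro n
  induction n with
  | zero =>
    intro T hT d hd
    obtain rfl : T = ∅ := Finset.card_eq_zero.mp (Nat.le_zero.mp hT)
    rw [mono_empty]
    exact CliffordAlgebra.contractLeft_one _ _
  | succ n ih =>
    intro T hT d hd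
    rcases T.eq_empty_or_nonempty with rfl | hne
    · rw [mono_empty]
      exact CliffordAlgebra.contractLeft_one _ _
    · have hiT : T.min' hne ∈ T := T.min'_mem hne
      have hcard : (T.erase (T.min' hne)).card ≤ n := by
        rw [Finset.card_erase_of_mem hiT]
        have : 1 ≤ T.card := Finset.card_pos.mpr hne
        omega
      rw [mono_min b Q hne, CliffordAlgebra.contractLeft_ι_mul, hd _ hiT, zero_smul,
        ih _ hcard d (fun s hs => hd s (Finset.mem_of_mem_erase hs)), mul_zero, zero_sub, neg_zero]

theorem contract_mono_eq_zero {T : Finset σ} {d : Module.Dual R L}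
    (hd : ∀ s ∈ T, d (b s) = 0) :
    CliffordAlgebra.contractLeft (Q := Q) d (mono b Q T) = 0 :=
  contract_mono_eq_zero_aux b Q T.card T le_rfl d hd

theorem contract_coord_mono_aux :
    ∀ (n : ℕ) (T : Finset σ), T.card ≤ n → ∀ t ∈ T,
      ∃ ε : R, (ε = 1 ∨ ε = -1) ∧
        CliffordAlgebra.contractLeft (Q := Q) (b.coord t) (mono b Q T) =
          ε • mono b Q (T.erase t) := by
  intro n
  induction n with
  | zero =>
    intro T hT t ht
    obtain rfl : T = ∅ := Finset.card_eq_zero.mp (Nat.le_zero.mp hT)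
    exact absurd ht (Finset.notMem_empty t)
  | succ n ih =>
    intro T hT t ht
    have hne : T.Nonempty := ⟨t, ht⟩
    have hiT : T.min' hne ∈ T := T.min'_mem hne
    have hcard : (T.erase (T.min' hne)).card ≤ n := by
      rw [Finset.card_erase_of_mem hiT]
      have : 1 ≤ T.card := Finset.card_pos.mpr hne
      omega
    rw [mono_min b Q hne, CliffordAlgebra.contractLeft_ι_mul]
    by_cases htm : t = T.min' hne
    · have h1 : b.coord t (b (T.min' hne)) = 1 := by
        rw [coord_basis_apply, if_pos htm.symm]
      have h0 : CliffordAlgebra.contractLeft (Q := Q) (b.coord t)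
          (mono b Q (T.erase (T.min' hne))) = 0 := by
        refine contract_mono_eq_zero b Q fun s hs => ?_
        rw [coord_basis_apply, if_neg]
        intro hst
        rw [hst, htm] at hs
        exact Finset.notMem_erase _ _ hs
      rw [h1, h0, mul_zero, sub_zero, one_smul, ← htm]
      exact ⟨1, Or.inl rfl, (one_smul R _).symm⟩
    · have ht' : t ∈ T.erase (T.min' hne) := Finset.mem_erase.mpr ⟨htm, ht⟩
      have h0 : b.coord t (b (T.min' hne)) = 0 := by
        rw [coord_basis_apply, if_neg (fun h => htm h.symm)]
      obtain ⟨ε, hε, heq⟩ := ih _ hcard t ht'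
      have hset : insert (T.min' hne) ((T.erase (T.min' hne)).erase t) = T.erase t := by
        rw [Finset.erase_right_comm, Finset.insert_erase
          (Finset.mem_erase.mpr ⟨fun h => htm h.symm, hiT⟩)]
      have hins : mono b Q (T.erase t) =
          CliffordAlgebra.ι Q (b (T.min' hne)) * mono b Q ((T.erase (T.min' hne)).erase t) := by
        rw [← hset]
        exact mono_insert b Q
          (fun s hs => T.min'_le s (Finset.mem_of_mem_erase (Finset.mem_of_mem_erase hs)))
          (fun h => (Finset.notMem_erase (T.min' hne) T) (Finset.mem_of_mem_erase h))
      refine ⟨-ε, ?_, ?_⟩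
      · rcases hε with h | h
        · exact Or.inr (by rw [h])
        · exact Or.inl (by rw [h, neg_neg])
      · rw [h0, zero_smul, heq, zero_sub, mul_smul_comm, hins, neg_smul]

theorem contract_coord_mono {T : Finset σ} {t : σ} (ht : t ∈ T) :
    ∃ ε : R, (ε = 1 ∨ ε = -1) ∧
      CliffordAlgebra.contractLeft (Q := Q) (b.coord t) (mono b Q T) =
        ε • mono b Q (T.erase t) :=
  contract_coord_mono_aux b Q T.card T le_rfl t ht

end CliffordMono
namespace CliffordMono

variable {R : Type*} [CommRing R] {L : Type*} [AddCommGroup L] [Module R L]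
variable {σ : Type*} [LinearOrder σ] [DecidableEq σ]
variable (b : Module.Basis σ R L) (Q : QuadraticForm R L)

theorem kappa_mono_self_aux :
    ∀ (n : ℕ) (T : Finset σ), T.card ≤ n → kappa b Q T (mono b Q T) = 1 := by
  intro n
  induction n with
  | zero =>
    intro T hT
    obtain rfl : T = ∅ := Finset.card_eq_zero.mp (Nat.le_zero.mp hT)
    simp
  | succ n ih =>
    intro T hT
    rcases T.eq_empty_or_nonempty with rfl | hne
    · simp
    · have hiT : T.min' hne ∈ T := T.min'_mem hne
      have hcard : (T.erase (T.min' hne)).card ≤ n := by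
        rw [Finset.card_erase_of_mem hiT]
        have : 1 ≤ T.card := Finset.card_pos.mpr hne
        omega
      have h0 : CliffordAlgebra.contractLeft (Q := Q) (b.coord (T.min' hne))
          (mono b Q (T.erase (T.min' hne))) = 0 := by
        refine contract_mono_eq_zero b Q fun s hs => ?_
        rw [coord_basis_apply, if_neg]
        intro hst
        rw [hst] at hs
        exact Finset.notMem_erase _ _ hs
      rw [kappa_min b Q hne]
      conv_lhs => rw [mono_min b Q hne]
      rw [CliffordAlgebra.contractLeft_ι_mul, coord_basis_apply, if_pos rfl, one_smul, h0,
        mul_zero, sub_zero]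
      exact ih _ hcard

theorem kappa_mono_self (T : Finset σ) : kappa b Q T (mono b Q T) = 1 :=
  kappa_mono_self_aux b Q T.card T le_rfl

theorem kappa_mono_eq_zero_aux :
    ∀ (n : ℕ) (T : Finset σ), T.card ≤ n → ∀ S : Finset σ, ¬ T ⊆ S →
      kappa b Q T (mono b Q S) = 0 := by
  intro n
  induction n with
  | zero =>
    intro T hT S hTS
    obtain rfl : T = ∅ := Finset.card_eq_zero.mp (Nat.le_zero.mp hT)
    exact absurd (Finset.empty_subset S) hTS
  | succ n ih =>
    intro T hT S hTS
    rcases T.eq_empty_or_nonempty with rfl | hne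
    · exact absurd (Finset.empty_subset S) hTS
    · have hiT : T.min' hne ∈ T := T.min'_mem hne
      have hcard : (T.erase (T.min' hne)).card ≤ n := by
        rw [Finset.card_erase_of_mem hiT]
        have : 1 ≤ T.card := Finset.card_pos.mpr hne
        omega
      rw [kappa_min b Q hne]
      by_cases hm : T.min' hne ∈ S
      · obtain ⟨ε, _, heq⟩ := contract_coord_mono b Q hm
        have hsub : ¬ T.erase (T.min' hne) ⊆ S.erase (T.min' hne) := by
          intro h
          refine hTS fun s hs => ?_
          by_cases hsm : s = T.min' hne
          · exact hsm ▸ hm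
          · exact Finset.mem_of_mem_erase (h (Finset.mem_erase.mpr ⟨hsm, hs⟩))
        rw [heq, map_smul, ih _ hcard _ hsub, smul_zero]
      · have h0 : CliffordAlgebra.contractLeft (Q := Q) (b.coord (T.min' hne))
            (mono b Q S) = 0 := by
          refine contract_mono_eq_zero b Q fun s hs => ?_
          rw [coord_basis_apply, if_neg]
          intro hst
          rw [hst] at hs
          exact hm hs
        rw [h0, map_zero]

theorem kappa_mono_eq_zero {T S : Finset σ} (hTS : ¬ T ⊆ S) :
    kappa b Q T (mono b Q S) = 0 :=
  kappa_mono_eq_zero_aux b Q T.card T le_rfl S hTS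

end CliffordMono
namespace CliffordMono

variable {R : Type*} [CommRing R] {L : Type*} [AddCommGroup L] [Module R L]
variable {σ : Type*} [LinearOrder σ] [DecidableEq σ]
variable (b : Module.Basis σ R L) (Q : QuadraticForm R L)

include b in
theorem smul_one_eq_zero {r : R} (h : r • (1 : CliffordAlgebra Q) = 0) : r = 0 := by
  classical
  set B : LinearMap.BilinMap R L R := QuadraticMap.toBilin Q b with hB
  have hBQ : ∀ x : L, B x x = Q x := by
    intro x
    have h2 := QuadraticMap.toQuadraticMap_toBilin Q b
    calc B x x = B.toQuadraticMap x := rfl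
      _ = Q x := by rw [hB, h2]
  let Z : QuadraticForm R L := 0
  let rho : L →ₗ[R] Module.End R (CliffordAlgebra Z) :=
    { toFun := fun x => LinearMap.mulLeft R (CliffordAlgebra.ι Z x) +
        CliffordAlgebra.contractLeft (Q := Z) (B x)
      map_add' := by
        intro x y
        refine LinearMap.ext fun w => ?_
        simp only [map_add, LinearMap.add_apply, LinearMap.mulLeft_apply, add_mul,
          LinearMap.coe_mk, AddHom.coe_mk]
        abel
      map_smul' := by
        intro c x
        refine LinearMap.ext fun w => ?_
        simp only [map_smul, LinearMap.smul_apply, LinearMap.mulLeft_apply, smul_mul_assoc,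
          RingHom.id_apply, LinearMap.add_apply, smul_add] }
  have hrho : ∀ (x : L) (w : CliffordAlgebra Z), rho x (rho x w) = Q x • w := by
    intro x w
    show CliffordAlgebra.ι Z x * (CliffordAlgebra.ι Z x * w +
        CliffordAlgebra.contractLeft (B x) w) +
        CliffordAlgebra.contractLeft (B x) (CliffordAlgebra.ι Z x * w +
          CliffordAlgebra.contractLeft (B x) w) = Q x • w
    rw [map_add, CliffordAlgebra.contractLeft_ι_mul, CliffordAlgebra.contractLeft_contractLeft,
      add_zero, mul_add, ← mul_assoc, CliffordAlgebra.ι_sq_scalar, hBQ]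
    have hZ : Z x = 0 := rfl
    rw [hZ, map_zero, zero_mul, zero_add]
    abel
  let ev : CliffordAlgebra Q →ₗ[R] CliffordAlgebra Z :=
    CliffordAlgebra.foldr Q rho hrho (1 : CliffordAlgebra Z)
  let cu : CliffordAlgebra Z →ₐ[R] R :=
    CliffordAlgebra.lift Z ⟨(0 : L →ₗ[R] R), fun m => by simp [Z]⟩
  have hr : r = cu (ev (r • (1 : CliffordAlgebra Q))) := by
    rw [map_smul, CliffordAlgebra.foldr_one, map_smul, map_one, smul_eq_mul, mul_one]
  rw [h, map_zero, map_zero] at hr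
  exact hr

theorem monoCombination_injective :
    Function.Injective (Finsupp.linearCombination R (mono b Q)) := by
  rw [← LinearMap.ker_eq_bot, LinearMap.ker_eq_bot']
  intro x hx
  by_contra hxne
  have hsupp : x.support.Nonempty := Finsupp.support_nonempty_iff.mpr hxne
  obtain ⟨T, hTmem, hTmax⟩ := Finset.exists_max_image x.support (fun S => S.card) hsupp
  have h0 : kappa b Q T (Finsupp.linearCombination R (mono b Q) x) = 0 := by
    rw [hx, map_zero]
  rw [Finsupp.linearCombination_apply, Finsupp.sum, map_sum] at h0
  rw [Finset.sum_eq_single T (fun S hS hST => ?_) (fun hT => absurd hTmem hT)] at h0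
  · rw [map_smul, kappa_mono_self] at h0
    exact (Finsupp.mem_support_iff.mp hTmem) (smul_one_eq_zero b Q h0)
  · rw [map_smul, kappa_mono_eq_zero b Q, smul_zero]
    intro hsub
    exact hST (Finset.eq_of_subset_of_card_le hsub (hTmax S hS)).symm

/-- The monomials attached to a basis form a basis of the Clifford algebra:
the corresponding linear equivalence. -/
def monoEquiv : (Finset σ →₀ R) ≃ₗ[R] CliffordAlgebra Q :=
  LinearEquiv.ofBijective (Finsupp.linearCombination R (mono b Q))
    ⟨monoCombination_injective b Q, by
      rw [← LinearMap.range_eq_top, Finsupp.range_linearCombination, mono_span_top]⟩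

@[simp] theorem monoEquiv_single (T : Finset σ) (r : R) :
    monoEquiv b Q (Finsupp.single T r) = r • mono b Q T := by
  show Finsupp.linearCombination R (mono b Q) (Finsupp.single T r) = _
  simp [monoEquiv, LinearEquiv.ofBijective_apply, Finsupp.linearCombination_single]

end CliffordMono




open CliffordMono in
/-- If `L₀ → L` is the inclusion of a `ℤ`-module direct summand of the finite free
`ℤ`-module `L` (formalized as an injective linear map `j` whose range is a direct
summand), `Q` a quadratic form on `L` and `Q₀ = Q ∘ j` its restriction to `L₀`, then
`CliffordAlgebra Q` is free as a module over `CliffordAlgebra Q₀`, the module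
structure being restriction of scalars along the algebra map `CliffordAlgebra.map`
induced by the isometry `j : (L₀, Q₀) → (L, Q)`. -/
theorem stmt3 {L : Type*} [AddCommGroup L] [Module ℤ L]
    [Module.Free ℤ L] [Module.Finite ℤ L]
    {L₀ : Type*} [AddCommGroup L₀] [Module ℤ L₀]
    (Q : QuadraticForm ℤ L) (j : L₀ →ₗ[ℤ] L) (hj : Function.Injective j)
    (hsummand : ∃ C : Submodule ℤ L, IsCompl (LinearMap.range j) C)
    (incl : (Q.comp j) →qᵢ Q) (hincl : incl.toLinearMap = j) :
    @Module.Free (CliffordAlgebra (Q.comp j)) (CliffordAlgebra Q) _ _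
      (Module.compHom (CliffordAlgebra Q)
        (CliffordAlgebra.map incl).toRingHom) := by
  classical
  obtain ⟨Cc, hC⟩ := hsummand
  have happ : ∀ x : L₀, incl x = j x := fun x => by
    simpa using LinearMap.congr_fun hincl x
  let bL := Module.finBasis ℤ L
  obtain ⟨m₀, bN⟩ := Submodule.basisOfPid bL (LinearMap.range j)
  obtain ⟨k, bC⟩ := Submodule.basisOfPid bL Cc
  letI : Module ℤ ↥(LinearMap.range j) := (LinearMap.range j).module
  letI : Module ℤ ↥Cc := Cc.module
  letI : Module ℤ (↥(LinearMap.range j) × ↥Cc) := Prod.instModule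
  let eJ := LinearEquiv.ofInjective j hj
  let b₀ := bN.map eJ.symm
  let b : Module.Basis (Fin m₀ ⊕ₗ Fin k) ℤ L :=
    ((bN.prod bC).reindex (toLex : Fin m₀ ⊕ Fin k ≃ Fin m₀ ⊕ₗ Fin k)).map
      (Submodule.prodEquivOfIsCompl _ _ hC)
  have hy : ∀ y : LinearMap.range j, j (eJ.symm y) = (y : L) := by
    intro y
    conv_rhs => rw [← eJ.apply_symm_apply y]
    exact (LinearEquiv.ofInjective_apply j (eJ.symm y)).symm
  have hbl : ∀ a : Fin m₀, b (toLex (Sum.inl a)) = j (b₀ a) := by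
    intro a
    show Submodule.prodEquivOfIsCompl _ _ hC
        (((bN.prod bC).reindex (toLex : Fin m₀ ⊕ Fin k ≃ Fin m₀ ⊕ₗ Fin k))
          (toLex (Sum.inl a))) = _
    rw [Module.Basis.reindex_apply, Equiv.symm_apply_apply,
      Submodule.coe_prodEquivOfIsCompl', Module.Basis.prod_apply_inl_fst, Module.Basis.prod_apply_inl_snd]
    show (bN a : L) + ((0 : Cc) : L) = j (eJ.symm (bN a))
    rw [hy (bN a)]
    simp
  -- the combinatorial embedding of pairs of finsets
  let dd : Finset (Fin m₀) → Finset (Fin k) → Finset (Fin m₀ ⊕ₗ Fin k) := fun S₀ S₁ =>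
    (S₀.disjSum S₁).map (toLex : Fin m₀ ⊕ Fin k ≃ Fin m₀ ⊕ₗ Fin k).toEmbedding
  have hdd_insert : ∀ (a : Fin m₀) (S₀ : Finset (Fin m₀)) (S₁ : Finset (Fin k)),
      dd (insert a S₀) S₁ = insert (toLex (Sum.inl a)) (dd S₀ S₁) := by
    intro a S₀ S₁
    show ((insert a S₀).disjSum S₁).map _ = _
    have h1 : (insert a S₀).disjSum S₁ = insert (Sum.inl a) (S₀.disjSum S₁) := by
      ext (x | x) <;> simp [or_assoc]
    rw [h1, Finset.map_insert]
    rfl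
  have hsplit : ∀ (n : ℕ) (S₀ : Finset (Fin m₀)), S₀.card ≤ n → ∀ S₁ : Finset (Fin k),
      mono b Q (dd S₀ S₁) =
        CliffordAlgebra.map incl (mono b₀ (Q.comp j) S₀) * mono b Q (dd ∅ S₁) := by
    intro n
    induction n with
    | zero =>
      intro S₀ hS₀ S₁
      obtain rfl : S₀ = ∅ := Finset.card_eq_zero.mp (Nat.le_zero.mp hS₀)
      rw [mono_empty, map_one, one_mul]
    | succ n ih =>
      intro S₀ hS₀ S₁
      rcases S₀.eq_empty_or_nonempty with rfl | hne
      · rw [mono_empty, map_one, one_mul]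
      · have haS : S₀.min' hne ∈ S₀ := S₀.min'_mem hne
        have hcard : (S₀.erase (S₀.min' hne)).card ≤ n := by
          rw [Finset.card_erase_of_mem haS]
          have : 1 ≤ S₀.card := Finset.card_pos.mpr hne
          omega
        set a := S₀.min' hne with ha
        have hS₀eq : S₀ = insert a (S₀.erase a) := (Finset.insert_erase haS).symm
        conv_lhs => rw [hS₀eq, hdd_insert]
        have hstep : mono b Q (insert (toLex (Sum.inl a)) (dd (S₀.erase a) S₁)) =
            CliffordAlgebra.ι Q (b (toLex (Sum.inl a))) * mono b Q (dd (S₀.erase a) S₁) := by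
          refine mono_insert b Q ?_ ?_
          · intro s hs
            obtain ⟨y, hy', rfl⟩ := Finset.mem_map.mp hs
            rcases y with y | y
            · exact Sum.Lex.inl_le_inl_iff.mpr
                (S₀.min'_le y (Finset.mem_of_mem_erase (by simpa using hy')))
            · exact Sum.Lex.inl_le_inr a y
          · intro hmem
            obtain ⟨y, hy', hyeq⟩ := Finset.mem_map.mp hmem
            obtain rfl : y = Sum.inl a := toLex.injective hyeq
            simp at hy'
        rw [hstep, ih _ hcard S₁, ← mul_assoc]
        congr 1
        rw [mono_min b₀ (Q.comp j) hne, map_mul, CliffordAlgebra.map_apply_ι, happ, ← ha, ← hbl]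
  letI : Module (CliffordAlgebra (Q.comp j)) (CliffordAlgebra Q) :=
    Module.compHom (CliffordAlgebra Q) (CliffordAlgebra.map incl).toRingHom
  have hsmul : ∀ (c : CliffordAlgebra (Q.comp j)) (y : CliffordAlgebra Q),
      c • y = CliffordAlgebra.map incl c * y := fun _ _ => rfl
  let Φ : (Finset (Fin k) →₀ CliffordAlgebra (Q.comp j)) →ₗ[CliffordAlgebra (Q.comp j)]
      CliffordAlgebra Q :=
    Finsupp.linearCombination (CliffordAlgebra (Q.comp j))
      fun S₁ : Finset (Fin k) => mono b Q (dd ∅ S₁)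
  let u : Finset (Fin k) × Finset (Fin m₀) ≃ Finset (Fin m₀ ⊕ₗ Fin k) :=
    ({ toFun := fun p => p.2.disjSum p.1
       invFun := fun T => (T.toRight, T.toLeft)
       left_inv := fun p => by simp
       right_inv := fun T => by simp [Finset.toLeft_disjSum_toRight] } :
        Finset (Fin k) × Finset (Fin m₀) ≃ Finset (Fin m₀ ⊕ Fin k)).trans
      (Equiv.finsetCongr (toLex : Fin m₀ ⊕ Fin k ≃ Fin m₀ ⊕ₗ Fin k))
  have hu : ∀ (S : Finset (Fin k)) (S₀ : Finset (Fin m₀)), u (S, S₀) = dd S₀ S := fun _ _ => rfl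
  have hcomp : ∀ z, Φ z = (monoEquiv b Q)
      ((Finsupp.domLCongr u : _ ≃ₗ[ℤ] _)
        ((Finsupp.finsuppProdLEquiv ℤ).symm
          ((Finsupp.mapRange.linearEquiv (monoEquiv b₀ (Q.comp j)).symm) z))) := by
    intro z
    induction z using Finsupp.induction_linear with
    | zero => simp
    | add f g hf hg => simp only [map_add, hf, hg]
    | single S c =>
      obtain ⟨y, rfl⟩ := (monoEquiv b₀ (Q.comp j)).surjective c
      induction y using Finsupp.induction_linear with
      | zero => simp
      | add f g hf hg => simp only [map_add, Finsupp.single_add, hf, hg]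
      | single S₀ r =>
        have h1 : (Finsupp.mapRange.linearEquiv (monoEquiv b₀ (Q.comp j)).symm)
            (Finsupp.single S ((monoEquiv b₀ (Q.comp j)) (Finsupp.single S₀ r))) =
            Finsupp.single S (Finsupp.single S₀ r) := by
          rw [Finsupp.mapRange.linearEquiv_apply,
            Finsupp.mapRange_single, LinearEquiv.symm_apply_apply]
        have h2 : (Finsupp.finsuppProdLEquiv ℤ).symm
            (Finsupp.single S (Finsupp.single S₀ (r : ℤ))) =
            Finsupp.single (S, S₀) (r : ℤ) := by
          ext p
          rcases p with ⟨s, s₀⟩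
          show Finsupp.single S (Finsupp.single S₀ r) s s₀ = _
          by_cases hs : S = s <;> by_cases hs₀ : S₀ = s₀ <;>
            simp [Finsupp.single_apply, hs, hs₀]
        have h3 : Φ (Finsupp.single S ((monoEquiv b₀ (Q.comp j)) (Finsupp.single S₀ r))) =
            ((monoEquiv b₀ (Q.comp j)) (Finsupp.single S₀ r)) • mono b Q (dd ∅ S) :=
          Finsupp.linearCombination_single _ _ _
        rw [h3, h1, h2, Finsupp.domLCongr_single, hu, monoEquiv_single, monoEquiv_single,
          hsmul, map_smul, smul_mul_assoc, ← hsplit S₀.card S₀ le_rfl S]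
        rfl
  have hbij : Function.Bijective Φ := by
    have hfun : ⇑Φ = (⇑(monoEquiv b Q) ∘ ⇑(Finsupp.domLCongr u : _ ≃ₗ[ℤ] _) ∘
        ⇑(Finsupp.finsuppProdLEquiv ℤ).symm ∘
        ⇑(Finsupp.mapRange.linearEquiv (monoEquiv b₀ (Q.comp j)).symm)) :=
      funext hcomp
    rw [hfun]
    exact (monoEquiv b Q).bijective.comp
      ((Finsupp.domLCongr u : _ ≃ₗ[ℤ] _).bijective.comp
        (((Finsupp.finsuppProdLEquiv ℤ).symm.bijective).comp
          (Finsupp.mapRange.linearEquiv (monoEquiv b₀ (Q.comp j)).symm).bijective))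
  exact Module.Free.of_basis (Module.Basis.ofRepr (LinearEquiv.ofBijective Φ hbij).symm)
end CliffordMonomialBasis
end
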